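/- arXiv:1002.2890 — 2 statements merged into one kernel-verified Lean document; each statement's English description precedes it below -/
import Mathlib

section
/- Let A be a real n×n matrix and B a real n×d matrix such that Rank(B, AB, …, A^{m−1}B) = n for some m ≥ 1. Then there exists t > 0 such that for all 0 ≤ s₁ < s₂ < ⋯ < s_m ≤ t, Rank(e^{s₁A}B, e^{s₂A}B, …, e^{s_mA}B) = n. -/
open Matrix

namespace KalmanAux

open NormedSpace

/-- Rank of an `n × k` real matrix equals `n` iff left multiplication by row vectors is
injective. -/
lemma rank_eq_card_iff_vecMul {n : ℕ} {K : Type*} [Fintype K] (M : Matrix (Fin n) K ℝ) :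
    M.rank = n ↔ ∀ v : Fin n → ℝ, v ᵥ* M = 0 → v = 0 := by
  rw [← Matrix.rank_transpose]
  have h1 : Mᵀ.rank = Module.finrank ℝ (LinearMap.range Mᵀ.mulVecLin) := rfl
  have h2 := LinearMap.finrank_range_add_finrank_ker Mᵀ.mulVecLin
  simp only [Module.finrank_fintype_fun_eq_card, Fintype.card_fin] at h2
  constructor
  · intro h v hv
    have hker : Module.finrank ℝ (LinearMap.ker Mᵀ.mulVecLin) = 0 := by omega
    rw [Submodule.finrank_eq_zero] at hker
    have : v ∈ LinearMap.ker Mᵀ.mulVecLin := by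
      simp [LinearMap.mem_ker, mulVecLin_apply, mulVec_transpose, hv]
    rw [hker] at this; simpa using this
  · intro h
    have hker : LinearMap.ker Mᵀ.mulVecLin = ⊥ := by
      rw [LinearMap.ker_eq_bot']
      intro v hv
      exact h v (by rwa [mulVecLin_apply, mulVec_transpose] at hv)
    rw [hker] at h2
    simp at h2
    omega

noncomputable def Lmap {n : ℕ} (w u : Fin n → ℝ) : Matrix (Fin n) (Fin n) ℝ →ₗ[ℝ] ℝ where
  toFun E := w ⬝ᵥ (E *ᵥ u)
  map_add' E F := by simp [Matrix.add_mulVec, dotProduct_add]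
  map_smul' c E := by simp [Matrix.smul_mulVec, dotProduct_smul]

lemma key_deriv {n : ℕ} (A : Matrix (Fin n) (Fin n) ℝ) (w u : Fin n → ℝ) (s : ℝ) :
    HasDerivAt (fun t : ℝ => w ⬝ᵥ (exp (t • A) *ᵥ u))
      ((w ᵥ* A) ⬝ᵥ (exp (s • A) *ᵥ u)) s := by
  letI : SeminormedRing (Matrix (Fin n) (Fin n) ℝ) := Matrix.linftyOpSemiNormedRing
  letI : NormedRing (Matrix (Fin n) (Fin n) ℝ) := Matrix.linftyOpNormedRing
  letI : NormedAlgebra ℝ (Matrix (Fin n) (Fin n) ℝ) := Matrix.linftyOpNormedAlgebra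
  have h := hasDerivAt_exp_smul_const' (𝕂 := ℝ) A s
  have hL := ((Lmap w u).toContinuousLinearMap.hasFDerivAt
    (x := exp (s • A))).comp_hasDerivAt s h
  have : (Lmap w u) (A * exp (s • A)) = (w ᵥ* A) ⬝ᵥ (exp (s • A) *ᵥ u) := by
    simp [Lmap, Matrix.mulVec_mulVec, Matrix.dotProduct_mulVec]
  rw [← this]
  exact hL

/-- Iterated Rolle: if `f 0` has `N` strictly increasing zeros in `[lo, hi]` and each
`f (j+1)` is the derivative of `f j`, then `f j` has a zero in `[lo, hi]` for `j < N`. -/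
lemma iterated_rolle {f : ℕ → ℝ → ℝ} (hf : ∀ j s, HasDerivAt (f j) (f (j + 1) s) s)
    (N : ℕ) (lo hi : ℝ) (g : ℕ → ℝ)
    (hgs : ∀ a b, a < b → b < N → g a < g b)
    (hglo : ∀ i < N, lo ≤ g i) (hghi : ∀ i < N, g i ≤ hi)
    (hgz : ∀ i < N, f 0 (g i) = 0) :
    ∀ j, ∀ i, i < N - j → ∃ c, lo ≤ c ∧ c ≤ hi ∧ f j c = 0 := by
  suffices H : ∀ j, ∃ g' : ℕ → ℝ,
      (∀ a b, a < b → b < N - j → g' a < g' b) ∧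
      (∀ i < N - j, lo ≤ g' i) ∧ (∀ i < N - j, g' i ≤ hi) ∧
      (∀ i < N - j, f j (g' i) = 0) by
    intro j i hi
    obtain ⟨g', _, h1, h2, h3⟩ := H j
    exact ⟨g' i, h1 i hi, h2 i hi, h3 i hi⟩
  intro j
  induction j with
  | zero => exact ⟨g, hgs, hglo, hghi, hgz⟩
  | succ j ih =>
    obtain ⟨g', hs', hlo', hhi', hz'⟩ := ih
    have hcont : Continuous (f j) := by
      rw [continuous_iff_continuousAt]
      exact fun x => (hf j x).continuousAt
    have H : ∀ i : ℕ, i + 1 < N - j →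
        ∃ c, g' i < c ∧ c < g' (i + 1) ∧ f (j + 1) c = 0 := by
      intro i hi
      have hab : g' i < g' (i + 1) := hs' i (i + 1) (Nat.lt_succ_self i) hi
      obtain ⟨c, hc, hz⟩ := exists_hasDerivAt_eq_zero hab hcont.continuousOn
        (by rw [hz' i (by omega), hz' (i + 1) hi])
        (fun x _ => hf j x)
      exact ⟨c, hc.1, hc.2, hz⟩
    set g'' : ℕ → ℝ := fun i => if h : i + 1 < N - j then (H i h).choose else 0 with hg''
    have hprop : ∀ i (h : i + 1 < N - j),
        g' i < g'' i ∧ g'' i < g' (i + 1) ∧ f (j + 1) (g'' i) = 0 := by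
      intro i h
      simp only [hg'', dif_pos h]
      exact (H i h).choose_spec
    refine ⟨g'', ?_, ?_, ?_, ?_⟩
    · intro a b hab hb
      have hb' : b + 1 < N - j := by omega
      have ha' : a + 1 < N - j := by omega
      have h1 : g'' a < g' (a + 1) := (hprop a ha').2.1
      have h2 : g' b < g'' b := (hprop b hb').1
      have h3 : g' (a + 1) ≤ g' b := by
        rcases eq_or_lt_of_le (Nat.succ_le_of_lt hab) with h | h
        · rw [show a + 1 = b from h]
        · exact le_of_lt (hs' _ _ h (by omega))
      linarith
    · intro i hi
      have hi' : i + 1 < N - j := by omega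
      exact le_trans (hlo' i (by omega)) (le_of_lt (hprop i hi').1)
    · intro i hi
      have hi' : i + 1 < N - j := by omega
      exact le_trans (le_of_lt (hprop i hi').2.1) (hhi' (i + 1) hi')
    · intro i hi
      exact (hprop i (by omega)).2.2

lemma cont_G {n : ℕ} (A : Matrix (Fin n) (Fin n) ℝ) (u : Fin n → ℝ) (j : ℕ) :
    Continuous fun p : (Fin n → ℝ) × ℝ => (p.1 ᵥ* A ^ j) ⬝ᵥ (exp (p.2 • A) *ᵥ u) := by
  have hexp : Continuous fun s : ℝ => exp (s • A) := by
    letI : SeminormedRing (Matrix (Fin n) (Fin n) ℝ) := Matrix.linftyOpSemiNormedRing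
    letI : NormedRing (Matrix (Fin n) (Fin n) ℝ) := Matrix.linftyOpNormedRing
    letI : NormedAlgebra ℝ (Matrix (Fin n) (Fin n) ℝ) := Matrix.linftyOpNormedAlgebra
    exact continuous_iff_continuousAt.2 fun s => (hasDerivAt_exp_smul_const' (𝕂 := ℝ) A s).continuousAt
  have hent : ∀ i l, Continuous fun s : ℝ => exp (s • A) i l := fun i l =>
    (continuous_apply l).comp ((continuous_apply i).comp hexp)
  simp only [dotProduct, vecMul, mulVec]
  refine continuous_finset_sum _ fun i _ => Continuous.mul ?_ ?_
  · exact continuous_finset_sum _ fun l _ =>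
      (((continuous_apply l).comp continuous_fst).mul continuous_const)
  · exact continuous_finset_sum _ fun l _ =>
      (((hent i l).comp continuous_snd).mul continuous_const)

lemma dot_col {n d : ℕ} (w : Fin n → ℝ) (E : Matrix (Fin n) (Fin n) ℝ)
    (B : Matrix (Fin n) (Fin d) ℝ) (c : Fin d) :
    w ⬝ᵥ (E *ᵥ fun l => B l c) = (w ᵥ* (E * B)) c := by
  simp only [vecMul, mulVec, dotProduct, Matrix.mul_apply, Finset.mul_sum]

end KalmanAux

open KalmanAux NormedSpace Filter Topology in
/-- Lemma 5.2 of the paper. If the Kalman rank condition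
`Rank(B, AB, …, A^{m−1}B) = n` holds for some `m ≥ 1`, then there exists `t > 0` such that
for all `0 ≤ s₁ < s₂ < ⋯ < s_m ≤ t` the block matrix
`(e^{s₁A}B, …, e^{s_mA}B)` has rank `n`. -/
theorem kalman_rank_exp {n d m : ℕ} (hm : 1 ≤ m)
    (A : Matrix (Fin n) (Fin n) ℝ) (B : Matrix (Fin n) (Fin d) ℝ)
    (hrank : (Matrix.of fun (i : Fin n) (p : Fin m × Fin d) =>
      ((A ^ (p.1 : ℕ)) * B) i p.2).rank = n) :
    ∃ t : ℝ, 0 < t ∧ ∀ s : Fin m → ℝ, StrictMono s → (∀ i, 0 ≤ s i) → (∀ i, s i ≤ t) →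
      (Matrix.of fun (i : Fin n) (p : Fin m × Fin d) =>
        ((NormedSpace.exp (s p.1 • A)) * B) i p.2).rank = n := by
  classical
  by_contra hcon
  push_neg at hcon
  have key : ∀ k : ℕ, ∃ v : Fin n → ℝ, ‖v‖ = 1 ∧ ∀ j : ℕ, j < m → ∀ c : Fin d,
      ∃ ξ, 0 ≤ ξ ∧ ξ ≤ 1 / ((k : ℝ) + 1) ∧
        (v ᵥ* A ^ j) ⬝ᵥ (exp (ξ • A) *ᵥ fun l => B l c) = 0 := by
    intro k
    have hkpos : (0 : ℝ) < 1 / ((k : ℝ) + 1) := by positivity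
    obtain ⟨s, hs1, hs2, hs3, hs4⟩ := hcon (1 / ((k : ℝ) + 1)) hkpos
    obtain ⟨v₀, hv₀M, hv₀⟩ : ∃ v : Fin n → ℝ,
        (v ᵥ* Matrix.of fun (i : Fin n) (p : Fin m × Fin d) =>
          ((exp (s p.1 • A)) * B) i p.2) = 0 ∧ v ≠ 0 := by
      by_contra h
      push_neg at h
      exact hs4 ((rank_eq_card_iff_vecMul _).mpr fun v hv => h v hv)
    set v : Fin n → ℝ := ‖v₀‖⁻¹ • v₀ with hvdef
    have hv₀n : ‖v₀‖ ≠ 0 := norm_ne_zero_iff.mpr hv₀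
    have hvnorm : ‖v‖ = 1 := by
      rw [hvdef, norm_smul, norm_inv, norm_norm, inv_mul_cancel₀ hv₀n]
    have hvM : (v ᵥ* Matrix.of fun (i : Fin n) (p : Fin m × Fin d) =>
        ((exp (s p.1 • A)) * B) i p.2) = 0 := by
      rw [hvdef, Matrix.smul_vecMul, hv₀M, smul_zero]
    refine ⟨v, hvnorm, ?_⟩
    intro j hj c
    set u : Fin n → ℝ := fun l => B l c with hu
    set f : ℕ → ℝ → ℝ := fun j' s' => (v ᵥ* A ^ j') ⬝ᵥ (exp (s' • A) *ᵥ u) with hf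
    have hder : ∀ j' s', HasDerivAt (f j') (f (j' + 1) s') s' := by
      intro j' s'
      have h := key_deriv A (v ᵥ* A ^ j') u s'
      rw [Matrix.vecMul_vecMul, ← pow_succ] at h
      exact h
    set g : ℕ → ℝ := fun i => if h : i < m then s ⟨i, h⟩ else 0 with hg
    have hgs : ∀ a b, a < b → b < m → g a < g b := by
      intro a b hab hb
      rw [hg]
      simp only [dif_pos hb, dif_pos (lt_trans hab hb)]
      exact hs1 (show (⟨a, lt_trans hab hb⟩ : Fin m) < ⟨b, hb⟩ from hab)
    have hglo : ∀ i < m, 0 ≤ g i := by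
      intro i hi; rw [hg]; simp only [dif_pos hi]; exact hs2 _
    have hghi : ∀ i < m, g i ≤ 1 / ((k : ℝ) + 1) := by
      intro i hi; rw [hg]; simp only [dif_pos hi]; exact hs3 _
    have hgz : ∀ i < m, f 0 (g i) = 0 := by
      intro i hi
      have h0 := congrFun hvM (⟨i, hi⟩, c)
      simp only [Pi.zero_apply] at h0
      rw [hf]
      simp only [hg, dif_pos hi, pow_zero, Matrix.vecMul_one, hu, dot_col]
      rw [← h0]
      simp [vecMul, dotProduct, Matrix.of_apply]
    obtain ⟨ξ, h1, h2, h3⟩ := iterated_rolle hder m 0 (1 / ((k : ℝ) + 1)) g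
      hgs hglo hghi hgz j 0 (by omega)
    exact ⟨ξ, h1, h2, h3⟩
  choose v hvnorm hv using key
  have hsphere : ∀ k, v k ∈ Metric.sphere (0 : Fin n → ℝ) 1 := fun k => by
    simp [Metric.mem_sphere, dist_zero_right, hvnorm k]
  obtain ⟨vv, hvvmem, φ, hφ, hconv⟩ :=
    (isCompact_sphere (0 : Fin n → ℝ) 1).tendsto_subseq hsphere
  have hvvnorm : ‖vv‖ = 1 := by
    simpa [dist_zero_right] using hvvmem
  have hlim : Tendsto (fun k : ℕ => 1 / ((φ k : ℝ) + 1)) atTop (𝓝 0) :=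
    tendsto_one_div_add_atTop_nhds_zero_nat.comp hφ.tendsto_atTop
  have hKal : ∀ j, j < m → ∀ c : Fin d,
      (vv ᵥ* A ^ j) ⬝ᵥ (fun l => B l c) = 0 := by
    intro j hj c
    choose ξ hξ0 hξ1 hξz using fun k => hv k j hj c
    have hξto : Tendsto (fun k => ξ (φ k)) atTop (𝓝 0) :=
      tendsto_of_tendsto_of_tendsto_of_le_of_le tendsto_const_nhds hlim
        (fun k => hξ0 (φ k)) (fun k => hξ1 (φ k))
    have hpair : Tendsto (fun k => (v (φ k), ξ (φ k))) atTop (𝓝 (vv, 0)) :=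
      hconv.prodMk_nhds hξto
    have h0 := ((cont_G A (fun l => B l c) j).tendsto (vv, 0)).comp hpair
    have heq : ((fun p : (Fin n → ℝ) × ℝ =>
        (p.1 ᵥ* A ^ j) ⬝ᵥ (exp (p.2 • A) *ᵥ fun l => B l c)) ∘
        fun k => (v (φ k), ξ (φ k))) = fun _ => (0 : ℝ) :=
      funext fun k => hξz (φ k)
    rw [heq] at h0
    have hval := tendsto_nhds_unique h0 tendsto_const_nhds
    rw [zero_smul, exp_zero, Matrix.one_mulVec] at hval
    simpa using hval
  have hvz : vv ᵥ* (Matrix.of fun (i : Fin n) (p : Fin m × Fin d) =>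
      ((A ^ (p.1 : ℕ)) * B) i p.2) = 0 := by
    funext p
    obtain ⟨jf, c⟩ := p
    have h1 : (vv ᵥ* A ^ (jf : ℕ)) ⬝ᵥ (fun l => B l c) =
        (vv ᵥ* (A ^ (jf : ℕ) * B)) c := by
      rw [← Matrix.dotProduct_mulVec, dot_col]
    have h2 := hKal (jf : ℕ) jf.isLt c
    rw [h1] at h2
    simpa [vecMul, dotProduct, Matrix.of_apply] using h2
  have := (rank_eq_card_iff_vecMul _).mp hrank vv hvz
  rw [this] at hvvnorm
  simp at hvvnorm
end

section
/- Let ν be a probability measure on ℝ with ∫ z ν(dz) = 0, ∫ z² ν(dz) = 1, and ∫ |z|³ ν(dz) < ∞. Let X_t = Σ_{i=1}^{N_t} ξ_i where N_t is a rate-1 Poisson process and ξ_i are i.i.d. with law ν, independent of N. Suppose the Berry–Esseen bound sup_{r∈ℝ} |P(X_t < r√t) − Φ(r)| ≤ c₀/√t holds for some c₀ > 0 and all t > 0, where Φ is the standard normal CDF. Then there exist constants c₁ > 0 such that for all x ∈ ℝ and t ≥ x², the total variation distance between the laws of x + X_t and X_t is at least (c₁|x| − 4c₀)/√t. -/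
open MeasureTheory ENNReal

/-- The standard Gaussian distribution function `Φ`. -/
noncomputable def stdGaussianCDF (r : ℝ) : ℝ :=
  ∫ u in Set.Iio r, Real.exp (-u ^ 2 / 2) / Real.sqrt (2 * Real.pi)

/-- The total variation norm `‖μ − ν‖_var` of the difference of two (finite) measures. -/
noncomputable def tvDist {α : Type*} [MeasurableSpace α] (μ ν : Measure α) : ℝ≥0∞ :=
  ⨆ s : Set α, (μ s - ν s) + (ν sᶜ - μ sᶜ)

lemma ofReal_toReal_sub_le {a b : ℝ≥0∞} (ha : a ≠ ⊤) (hb : b ≠ ⊤) :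
    ENNReal.ofReal (a.toReal - b.toReal) ≤ a - b := by
  rcases le_total b a with h | h
  · rw [← ENNReal.toReal_sub_of_le h ha]
    exact ENNReal.ofReal_toReal_le
  · have : a.toReal ≤ b.toReal := ENNReal.toReal_mono hb h
    rw [ENNReal.ofReal_eq_zero.mpr (by linarith)]
    exact zero_le

lemma gauss_integrable :
    MeasureTheory.Integrable (fun u : ℝ => Real.exp (-u ^ 2 / 2) / Real.sqrt (2 * Real.pi)) := by
  have h : (fun u : ℝ => Real.exp (-u ^ 2 / 2) / Real.sqrt (2 * Real.pi))
      = fun u : ℝ => Real.exp (-(1/2 : ℝ) * u ^ 2) / Real.sqrt (2 * Real.pi) := by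
    funext u; ring_nf
  rw [h]
  exact (integrable_exp_neg_mul_sq (by norm_num)).div_const _

lemma gauss_const_le : (1 : ℝ) / 10 ≤ Real.exp (-(1:ℝ)/2) / Real.sqrt (2 * Real.pi) := by
  have hS0 : 0 < Real.sqrt (2 * Real.pi) := Real.sqrt_pos.mpr (by positivity)
  have hS : Real.sqrt (2 * Real.pi) ≤ 3 := by
    have h9 : Real.sqrt 9 = 3 := by
      rw [show (9:ℝ) = 3 ^ 2 by norm_num, Real.sqrt_sq (by norm_num)]
    calc Real.sqrt (2 * Real.pi) ≤ Real.sqrt 9 :=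
          Real.sqrt_le_sqrt (by nlinarith [Real.pi_lt_d2])
      _ = 3 := h9
  have hE : (1 : ℝ) / 2 ≤ Real.exp (-(1:ℝ)/2) := by
    have h1 : Real.exp ((1:ℝ)/2) * Real.exp ((1:ℝ)/2) = Real.exp 1 := by
      rw [← Real.exp_add]; norm_num
    have h2 : Real.exp 1 < 2.7182818286 := Real.exp_one_lt_d9
    have h3 : 0 < Real.exp ((1:ℝ)/2) := Real.exp_pos _
    have h4 : Real.exp ((1:ℝ)/2) ≤ 2 := by nlinarith
    have h5 : Real.exp (-(1:ℝ)/2) = (Real.exp ((1:ℝ)/2))⁻¹ := by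
      rw [← Real.exp_neg]; norm_num
    rw [h5]
    rw [le_inv_comm₀ (by norm_num) h3]
    linarith
  rw [le_div_iff₀ hS0]
  nlinarith

lemma gauss_lb {δ : ℝ} (h0 : 0 ≤ δ) (h1 : δ ≤ 1) :
    δ / 10 ≤ stdGaussianCDF δ - stdGaussianCDF 0 := by
  have hdisj : Disjoint (Set.Iio (0:ℝ)) (Set.Ico 0 δ) := by
    rw [Set.disjoint_left]
    intro u hu hu'
    exact absurd hu'.1 (not_le.mpr hu)
  have hunion : Set.Iio (0:ℝ) ∪ Set.Ico 0 δ = Set.Iio δ := Set.Iio_union_Ico_eq_Iio h0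
  have hsplit : stdGaussianCDF δ = stdGaussianCDF 0 +
      ∫ u in Set.Ico 0 δ, Real.exp (-u ^ 2 / 2) / Real.sqrt (2 * Real.pi) := by
    unfold stdGaussianCDF
    rw [← hunion, MeasureTheory.setIntegral_union hdisj measurableSet_Ico
      gauss_integrable.integrableOn gauss_integrable.integrableOn]
  rw [hsplit]
  have hconst : ∫ _u in Set.Ico (0:ℝ) δ, (Real.exp (-(1:ℝ)/2) / Real.sqrt (2 * Real.pi))
      = δ * (Real.exp (-(1:ℝ)/2) / Real.sqrt (2 * Real.pi)) := by
    rw [MeasureTheory.setIntegral_const, measureReal_def, Real.volume_Ico, smul_eq_mul,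
      ENNReal.toReal_ofReal (by linarith)]
    ring_nf
  have hmono : ∫ _u in Set.Ico (0:ℝ) δ, (Real.exp (-(1:ℝ)/2) / Real.sqrt (2 * Real.pi))
      ≤ ∫ u in Set.Ico 0 δ, Real.exp (-u ^ 2 / 2) / Real.sqrt (2 * Real.pi) := by
    refine MeasureTheory.setIntegral_mono_on
      ((MeasureTheory.integrableOn_const_iff).mpr (Or.inr ?_))
      gauss_integrable.integrableOn measurableSet_Ico ?_
    · rw [Real.volume_Ico]; exact ENNReal.ofReal_lt_top
    · intro u hu
      have hu0 : 0 ≤ u := hu.1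
      have hu1 : u ≤ 1 := le_trans (le_of_lt hu.2) h1
      have : (1:ℝ)/2 ≤ -u ^ 2 / 2 + 1 := by nlinarith
      have hS : (0:ℝ) < Real.sqrt (2 * Real.pi) := Real.sqrt_pos.mpr (by positivity)
      have hE : Real.exp (-(1:ℝ)/2) ≤ Real.exp (-u ^ 2 / 2) :=
        Real.exp_le_exp.mpr (by nlinarith)
      exact div_le_div_of_nonneg_right hE hS.le
  have hδc : δ / 10 ≤ δ * (Real.exp (-(1:ℝ)/2) / Real.sqrt (2 * Real.pi)) := by
    have := gauss_const_le
    nlinarith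
  linarith [hconst ▸ hmono]

/-- Let `X_t` be a compound Poisson process (with drift `b₀`) whose jump
distribution has zero mean, unit variance and finite third moment, and suppose the
Berry–Esseen bound `sup_r |P(X_t < r√t + b₀t) − Φ(r)| ≤ c₀/√t` holds. Then there is
`c₁ > 0` such that for all `x` and `t ≥ x²`, the total variation distance between the laws
of `x + X_t` and `X_t` is at least `(c₁|x| − 4c₀)/√t`. -/
theorem tv_lower_bound_berry_esseen
    {Ω : Type*} [MeasurableSpace Ω] (P : Measure Ω) [IsProbabilityMeasure P]
    (X : ℝ → Ω → ℝ) (hX : ∀ t, Measurable (X t)) (b₀ : ℝ)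
    (c₀ : ℝ) (hc₀ : 0 < c₀)
    (hBE : ∀ t : ℝ, 0 < t → ∀ r : ℝ,
      |(P {ω | X t ω < r * Real.sqrt t + b₀ * t}).toReal - stdGaussianCDF r| ≤
        c₀ / Real.sqrt t) :
    ∃ c₁ : ℝ, 0 < c₁ ∧ ∀ x t : ℝ, x ^ 2 ≤ t →
      ENNReal.ofReal ((c₁ * |x| - 4 * c₀) / Real.sqrt t) ≤
        tvDist (Measure.map (fun ω => x + X t ω) P) (Measure.map (X t) P) := by
  refine ⟨1/5, by norm_num, fun x t hxt => ?_⟩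
  by_cases hcrit : 1/5 * |x| - 4 * c₀ ≤ 0
  · have hnp : (1/5 * |x| - 4 * c₀) / Real.sqrt t ≤ 0 :=
      div_nonpos_of_nonpos_of_nonneg hcrit (Real.sqrt_nonneg t)
    rw [ENNReal.ofReal_eq_zero.mpr hnp]
    exact zero_le
  · push_neg at hcrit
    have hxpos : 0 < |x| := by nlinarith
    have hx0 : x ≠ 0 := abs_pos.mp hxpos
    have ht : 0 < t := lt_of_lt_of_le (by positivity) hxt
    have hst : 0 < Real.sqrt t := Real.sqrt_pos.mpr ht
    have hxle : |x| ≤ Real.sqrt t := by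
      rw [← Real.sqrt_sq_eq_abs]; exact Real.sqrt_le_sqrt hxt
    set δ := |x| / Real.sqrt t with hδ
    have hδ0 : 0 < δ := div_pos hxpos hst
    have hδ1 : δ ≤ 1 := (div_le_one hst).mpr hxle
    have hδt : δ * Real.sqrt t = |x| := div_mul_cancel₀ _ hst.ne'
    clear_value δ
    have hA := hBE t ht δ
    have hB := hBE t ht 0
    rw [hδt] at hA
    rw [zero_mul, zero_add] at hB
    set A := (P {ω | X t ω < |x| + b₀ * t}).toReal with hAdef
    set B := (P {ω | X t ω < b₀ * t}).toReal with hBdef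
    clear_value A B
    have hG := gauss_lb hδ0.le hδ1
    have h1 := abs_le.mp hA
    have h2 := abs_le.mp hB
    have hdlb : δ/10 - 2*(c₀/Real.sqrt t) ≤ A - B := by
      linarith [h1.1, h1.2, h2.1, h2.2]
    have hx20 : 20 * c₀ < |x| := by nlinarith
    have hgap : 2*(c₀/Real.sqrt t) < δ/10 := by
      have e1 : 2*(c₀/Real.sqrt t) = (2*c₀)/Real.sqrt t := by ring
      have e2 : δ/10 = (|x|/10)/Real.sqrt t := by rw [hδ]; ring
      rw [e1, e2, div_lt_div_iff₀ hst hst]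
      nlinarith
    have hd0 : 0 < A - B := by linarith
    have key : (1/5 * |x| - 4*c₀)/Real.sqrt t ≤ (A - B) + (A - B) := by
      have heq : (1/5 * |x| - 4*c₀)/Real.sqrt t = 2*(δ/10 - 2*(c₀/Real.sqrt t)) := by
        rw [hδ]; field_simp; ring
      rw [heq]; linarith
    set μ := Measure.map (fun ω => x + X t ω) P with hμdef
    set ν := Measure.map (X t) P with hνdef
    have hμprob : IsProbabilityMeasure μ :=
      Measure.isProbabilityMeasure_map ((hX t).const_add x).aemeasurable
    have hνprob : IsProbabilityMeasure ν :=
      Measure.isProbabilityMeasure_map (hX t).aemeasurable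
    have mapν : ∀ c : ℝ, ν (Set.Iio c) = P {ω | X t ω < c} := fun c => by
      rw [hνdef, Measure.map_apply (hX t) measurableSet_Iio]; rfl
    have mapμ : ∀ c : ℝ, μ (Set.Iio c) = P {ω | X t ω < c - x} := fun c => by
      rw [hμdef, Measure.map_apply ((hX t).const_add x) measurableSet_Iio]
      congr 1
      ext ω
      simp only [Set.mem_preimage, Set.mem_Iio, Set.mem_setOf_eq]
      constructor <;> intro h <;> linarith
    -- toReal of complements
    have complμ : ∀ c : ℝ, (μ (Set.Iio c)ᶜ).toReal = 1 - (μ (Set.Iio c)).toReal := by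
      intro c
      rw [prob_compl_eq_one_sub measurableSet_Iio,
        ENNReal.toReal_sub_of_le prob_le_one one_ne_top, ENNReal.toReal_one]
    have complν : ∀ c : ℝ, (ν (Set.Iio c)ᶜ).toReal = 1 - (ν (Set.Iio c)).toReal := by
      intro c
      rw [prob_compl_eq_one_sub measurableSet_Iio,
        ENNReal.toReal_sub_of_le prob_le_one one_ne_top, ENNReal.toReal_one]
    obtain ⟨s, hs1, hs2⟩ : ∃ s : Set ℝ,
        A - B ≤ (μ s).toReal - (ν s).toReal ∧
        A - B ≤ (ν sᶜ).toReal - (μ sᶜ).toReal := by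
      rcases hx0.lt_or_gt with hxneg | hxpos'
      · -- x < 0 : s = Iio (b₀ t)
        refine ⟨Set.Iio (b₀ * t), ?_, ?_⟩
        · rw [mapμ, mapν]
          have : b₀ * t - x = |x| + b₀ * t := by rw [abs_of_neg hxneg]; ring
          rw [this, ← hAdef, ← hBdef]
        · rw [complμ, complν, mapμ, mapν]
          have : b₀ * t - x = |x| + b₀ * t := by rw [abs_of_neg hxneg]; ring
          rw [this, ← hAdef, ← hBdef]
          linarith
      · -- x > 0 : s = (Iio (x + b₀ t))ᶜ
        refine ⟨(Set.Iio (x + b₀ * t))ᶜ, ?_, ?_⟩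
        · rw [complμ, complν, mapμ, mapν]
          have h1' : x + b₀ * t - x = b₀ * t := by ring
          have h2' : x + b₀ * t = |x| + b₀ * t := by rw [abs_of_pos hxpos']
          rw [h1', h2', ← hAdef, ← hBdef]
          linarith
        · rw [compl_compl, mapμ, mapν]
          have h1' : x + b₀ * t - x = b₀ * t := by ring
          have h2' : x + b₀ * t = |x| + b₀ * t := by rw [abs_of_pos hxpos']
          rw [h1', h2', ← hAdef, ← hBdef]
    calc ENNReal.ofReal ((1/5 * |x| - 4 * c₀) / Real.sqrt t)
        ≤ ENNReal.ofReal ((A - B) + (A - B)) := ENNReal.ofReal_le_ofReal key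
      _ ≤ ENNReal.ofReal (A - B) + ENNReal.ofReal (A - B) := ENNReal.ofReal_add_le
      _ ≤ (μ s - ν s) + (ν sᶜ - μ sᶜ) := by
          refine add_le_add ?_ ?_
          · exact le_trans (ENNReal.ofReal_le_ofReal hs1)
              (ofReal_toReal_sub_le (measure_ne_top μ s) (measure_ne_top ν s))
          · exact le_trans (ENNReal.ofReal_le_ofReal hs2)
              (ofReal_toReal_sub_le (measure_ne_top ν sᶜ) (measure_ne_top μ sᶜ))
      _ ≤ tvDist μ ν := le_iSup (fun s : Set ℝ => (μ s - ν s) + (ν sᶜ - μ sᶜ)) s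
end
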